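/- Let (α_n) and (β_n) be sequences of sub-probability measures on ℝ^d that are widely separated with respect to some strictly positive continuous V vanishing at infinity, i.e., ∫∫ V(x−y) dα_n(x) dβ_n(y) → 0. Then for every continuous W: ℝ^d → ℝ vanishing at infinity, ∫∫ W(x−y) dα_n(x) dβ_n(y) → 0. -/

import Mathlib

open MeasureTheory Filter Topology Metric

/-- A continuous real function vanishing at infinity is bounded. -/
lemma aux_bdd {X : Type*} [TopologicalSpace X] (f : X → ℝ) (hf : Continuous f)
    (h0 : Tendsto f (cocompact X) (𝓝 0)) : ∃ M, 0 ≤ M ∧ ∀ x, |f x| ≤ M := by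
  have h1 : ∀ᶠ x in cocompact X, dist (f x) 0 < 1 := Metric.tendsto_nhds.mp h0 1 one_pos
  obtain ⟨K, hK, hKsub⟩ := Filter.mem_cocompact.mp (Filter.eventually_iff.mp h1)
  obtain ⟨B, hB⟩ := hK.exists_bound_of_continuousOn hf.continuousOn
  refine ⟨max B 1, le_max_of_le_right zero_le_one, fun x => ?_⟩
  by_cases hx : x ∈ K
  · exact le_max_of_le_left (hB x hx)
  · have := hKsub hx
    simp only [Set.mem_setOf_eq, Real.dist_eq, sub_zero] at this
    exact le_max_of_le_right this.le

/-- Key estimate: |W x| ≤ C * V x + ε. -/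
lemma aux_key {X : Type*} [TopologicalSpace X] [Nonempty X] (V W : X → ℝ)
    (hVc : Continuous V) (hVpos : ∀ x, 0 < V x) (hWc : Continuous W)
    (hW0 : Tendsto W (cocompact X) (𝓝 0)) (ε : ℝ) (hε : 0 < ε) :
    ∃ C, 0 ≤ C ∧ ∀ x, |W x| ≤ C * V x + ε := by
  have h1 : ∀ᶠ x in cocompact X, dist (W x) 0 < ε := Metric.tendsto_nhds.mp hW0 ε hε
  obtain ⟨K0, hK0, hKsub⟩ := Filter.mem_cocompact.mp (Filter.eventually_iff.mp h1)
  obtain ⟨x₀⟩ := ‹Nonempty X›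
  set K : Set X := insert x₀ K0 with hKdef
  have hK : IsCompact K := hK0.insert x₀
  have hKne : K.Nonempty := ⟨x₀, Set.mem_insert _ _⟩
  obtain ⟨z, hzK, hz⟩ := hK.exists_isMinOn hKne hVc.continuousOn
  have hm : 0 < V z := hVpos z
  obtain ⟨B, hB⟩ := hK.exists_bound_of_continuousOn hWc.continuousOn
  have hB0 : 0 ≤ B := le_trans (norm_nonneg _) (hB x₀ (Set.mem_insert _ _))
  refine ⟨B / V z, div_nonneg hB0 hm.le, fun x => ?_⟩
  by_cases hx : x ∈ K
  · have h2 : V z ≤ V x := hz hx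
    have : |W x| ≤ B := hB x hx
    have h3 : B = (B / V z) * V z := by field_simp
    calc |W x| ≤ B := this
      _ = (B / V z) * V z := h3
      _ ≤ (B / V z) * V x := by
          exact mul_le_mul_of_nonneg_left h2 (div_nonneg hB0 hm.le)
      _ ≤ (B / V z) * V x + ε := le_add_of_nonneg_right hε.le
  · have hx0 : x ∉ K0 := fun h => hx (Set.mem_insert_of_mem _ h)
    have := hKsub hx0
    simp only [Set.mem_setOf_eq, Real.dist_eq, sub_zero] at this
    have h4 : 0 ≤ (B / V z) * V x :=
      mul_nonneg (div_nonneg hB0 hm.le) (hVpos x).le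
    linarith

/-- If sequences of sub-probability measures α_n, β_n are widely separated with
respect to some strictly positive continuous V vanishing at infinity, then they
are widely separated with respect to every continuous W vanishing at infinity. -/
theorem stmt8 (d : ℕ) (α β : ℕ → Measure (EuclideanSpace ℝ (Fin d)))
    (hα : ∀ n, α n Set.univ ≤ 1) (hβ : ∀ n, β n Set.univ ≤ 1)
    (V : EuclideanSpace ℝ (Fin d) → ℝ) (hVc : Continuous V) (hVpos : ∀ x, 0 < V x)
    (hV0 : Tendsto V (cocompact (EuclideanSpace ℝ (Fin d))) (𝓝 0))
    (hsep : Tendsto (fun n => ∫ x, ∫ y, V (x - y) ∂(β n) ∂(α n)) atTop (𝓝 0))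
    (W : EuclideanSpace ℝ (Fin d) → ℝ) (hWc : Continuous W)
    (hW0 : Tendsto W (cocompact (EuclideanSpace ℝ (Fin d))) (𝓝 0)) :
    Tendsto (fun n => ∫ x, ∫ y, W (x - y) ∂(β n) ∂(α n)) atTop (𝓝 0) := by
  haveI hαf : ∀ n, IsFiniteMeasure (α n) :=
    fun n => ⟨lt_of_le_of_lt (hα n) ENNReal.one_lt_top⟩
  haveI hβf : ∀ n, IsFiniteMeasure (β n) :=
    fun n => ⟨lt_of_le_of_lt (hβ n) ENNReal.one_lt_top⟩
  obtain ⟨MV, hMV0, hMV⟩ := aux_bdd V hVc hV0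
  rw [Metric.tendsto_nhds]
  intro ε hε
  obtain ⟨C, hC0, hC⟩ := aux_key V W hVc hVpos hWc hW0 (ε / 2) (by positivity)
  -- basic integrability facts
  have hVint : ∀ n x, Integrable (fun y => V (x - y)) (β n) := by
    intro n x
    refine Integrable.mono' (integrable_const MV)
      ((show Continuous fun y => V (x - y) by fun_prop).aestronglyMeasurable) ?_
    exact Filter.Eventually.of_forall fun y => by
      simpa [Real.norm_eq_abs] using hMV (x - y)
  have hβle : ∀ n, ((β n) Set.univ).toReal ≤ 1 := fun n => by
    have := hβ n
    simpa using ENNReal.toReal_le_of_le_ofReal one_pos.le (by simpa using this)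
  have hαle : ∀ n, ((α n) Set.univ).toReal ≤ 1 := fun n => by
    have := hα n
    simpa using ENNReal.toReal_le_of_le_ofReal one_pos.le (by simpa using this)
  have hVint2 : ∀ n, Integrable (fun x => ∫ y, V (x - y) ∂(β n)) (α n) := by
    intro n
    have hsm : StronglyMeasurable
        (Function.uncurry fun x y : EuclideanSpace ℝ (Fin d) => V (x - y)) :=
      (show Continuous (Function.uncurry fun x y : EuclideanSpace ℝ (Fin d) => V (x - y)) by
        fun_prop).stronglyMeasurable
    refine Integrable.mono' (integrable_const MV)
      (hsm.integral_prod_right).aestronglyMeasurable ?_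
    refine Filter.Eventually.of_forall fun x => ?_
    calc ‖∫ y, V (x - y) ∂(β n)‖ ≤ ∫ y, MV ∂(β n) := by
          refine norm_integral_le_of_norm_le (integrable_const MV) ?_
          exact Filter.Eventually.of_forall fun y => by
            simpa [Real.norm_eq_abs] using hMV (x - y)
      _ = ((β n) Set.univ).toReal * MV := by simp [smul_eq_mul, measureReal_def]
      _ ≤ 1 * MV := mul_le_mul_of_nonneg_right (hβle n) hMV0
      _ = MV := one_mul MV
  -- pointwise bound on the inner integral
  have hb : ∀ n x, ‖∫ y, W (x - y) ∂(β n)‖ ≤ C * (∫ y, V (x - y) ∂(β n)) + ε / 2 := by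
    intro n x
    calc ‖∫ y, W (x - y) ∂(β n)‖
        ≤ ∫ y, (C * V (x - y) + ε / 2) ∂(β n) := by
          refine norm_integral_le_of_norm_le
            (((hVint n x).const_mul C).add (integrable_const _)) ?_
          exact Filter.Eventually.of_forall fun y => by
            simpa [Real.norm_eq_abs] using hC (x - y)
      _ = C * (∫ y, V (x - y) ∂(β n)) + ((β n) Set.univ).toReal * (ε / 2) := by
          rw [integral_add ((hVint n x).const_mul C) (integrable_const _),
            integral_const_mul, integral_const, smul_eq_mul, measureReal_def]
      _ ≤ C * (∫ y, V (x - y) ∂(β n)) + 1 * (ε / 2) := by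
          have := mul_le_mul_of_nonneg_right (hβle n) (le_of_lt (by positivity : (0:ℝ) < ε / 2))
          linarith
      _ = C * (∫ y, V (x - y) ∂(β n)) + ε / 2 := by ring
  -- bound on the double integral
  have hn : ∀ n, ‖∫ x, ∫ y, W (x - y) ∂(β n) ∂(α n)‖
      ≤ C * (∫ x, ∫ y, V (x - y) ∂(β n) ∂(α n)) + ε / 2 := by
    intro n
    calc ‖∫ x, ∫ y, W (x - y) ∂(β n) ∂(α n)‖
        ≤ ∫ x, (C * (∫ y, V (x - y) ∂(β n)) + ε / 2) ∂(α n) := by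
          refine norm_integral_le_of_norm_le
            (((hVint2 n).const_mul C).add (integrable_const _)) ?_
          exact Filter.Eventually.of_forall fun x => hb n x
      _ = C * (∫ x, ∫ y, V (x - y) ∂(β n) ∂(α n)) + ((α n) Set.univ).toReal * (ε / 2) := by
          rw [integral_add ((hVint2 n).const_mul C) (integrable_const _),
            integral_const_mul, integral_const, smul_eq_mul, measureReal_def]
      _ ≤ C * (∫ x, ∫ y, V (x - y) ∂(β n) ∂(α n)) + ε / 2 := by
          have := mul_le_mul_of_nonneg_right (hαle n) (le_of_lt (by positivity : (0:ℝ) < ε / 2))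
          linarith
  -- conclude
  have hCI : Tendsto (fun n => C * (∫ x, ∫ y, V (x - y) ∂(β n) ∂(α n))) atTop (𝓝 0) := by
    simpa using hsep.const_mul C
  have hev : ∀ᶠ n in atTop,
      C * (∫ x, ∫ y, V (x - y) ∂(β n) ∂(α n)) < ε / 2 :=
    hCI.eventually_lt_const (by positivity)
  filter_upwards [hev] with n hn2
  rw [Real.dist_eq, sub_zero]
  calc |∫ x, ∫ y, W (x - y) ∂(β n) ∂(α n)|
      ≤ C * (∫ x, ∫ y, V (x - y) ∂(β n) ∂(α n)) + ε / 2 := hn n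
    _ < ε / 2 + ε / 2 := by linarith
    _ = ε := by ring
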